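/- Let b : [0,∞) → (0,∞) be decreasing with b(t) ≥ (log t)^ε̃ / t for all t ≥ T₁ (where ε̃ > 0, T₁ > 1) and suppose b(t/2) ≤ C₁ b(t) for all t ≥ 0 with some constant C₁ ≥ 1. Then for every k > 0 there exists a constant c > 1 such that: whenever x, y ≥ 0 satisfy b(y)·|x − y| ≤ k, one has (1/c) b(x) ≤ b(y) ≤ c · b(x). -/
import Mathlib


open Real Set

set_option maxHeartbeats 1000000 in
/-- One-dimensional Lemma 2.3 (decreasing case): a positive decreasing `b` with
`b(t) ≥ (log t)^ε̃/t` for `t ≥ T₁` and `b(t/2) ≤ C₁ b(t)` is comparable at points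
`x, y` with `b(y)|x−y| ≤ k`. -/
theorem b_comparable_at_scale_decreasing
    (b : ℝ → ℝ) (εt T₁ C₁ : ℝ)
    (hεt : 0 < εt) (hT₁ : 1 < T₁) (hC₁ : 1 ≤ C₁)
    (hbpos : ∀ t ≥ (0:ℝ), 0 < b t)
    (hbdec : AntitoneOn b (Set.Ici (0:ℝ)))
    (hlow : ∀ t ≥ T₁, (Real.log t) ^ εt / t ≤ b t)
    (hhalf : ∀ t ≥ (0:ℝ), b (t / 2) ≤ C₁ * b t) :
    ∀ k > (0:ℝ), ∃ c > (1:ℝ), ∀ x ≥ (0:ℝ), ∀ y ≥ (0:ℝ),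
      b y * |x - y| ≤ k → b x / c ≤ b y ∧ b y ≤ c * b x := by
  intro k hk
  set T := max T₁ (Real.exp ((2*k) ^ (1/εt))) with hTdef
  have hTT₁ : T₁ ≤ T := le_max_left _ _
  have hT1 : (1:ℝ) < T := lt_of_lt_of_le hT₁ hTT₁
  have hT0 : (0:ℝ) ≤ T := by linarith
  have hbT : 0 < b T := hbpos T hT0
  set M := T + k / b T with hMdef
  have hTM : T ≤ M := by
    have : 0 ≤ k / b T := le_of_lt (div_pos hk hbT)
    rw [hMdef]; linarith
  have hM0 : (0:ℝ) ≤ M := le_trans hT0 hTM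
  have hbM : 0 < b M := hbpos M hM0
  have hb0 : 0 < b 0 := hbpos 0 le_rfl
  have hbMT : b M ≤ b T := hbdec (mem_Ici.mpr hT0) (mem_Ici.mpr hM0) hTM
  have hb0M : b M ≤ b 0 := hbdec (mem_Ici.mpr le_rfl) (mem_Ici.mpr hM0) hM0
  set c := C₁ + b 0 / b M with hcdef
  have hratio : (1:ℝ) ≤ b 0 / b M := (one_le_div hbM).mpr hb0M
  have hc1 : (1:ℝ) < c := by rw [hcdef]; linarith
  have hcpos : (0:ℝ) < c := by linarith
  have hcC : C₁ ≤ c := by rw [hcdef]; linarith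
  have hcR : b 0 / b M ≤ c := by rw [hcdef]; linarith
  clear_value T M c
  -- key estimate: for y ≥ T, k / b y ≤ y / 2
  have hkey : ∀ y, T ≤ y → k / b y ≤ y / 2 := by
    intro y hy
    have hy0 : (0:ℝ) < y := lt_trans one_pos (lt_of_lt_of_le hT1 hy)
    have hyT₁ : T₁ ≤ y := le_trans hTT₁ hy
    have hexpT : Real.exp ((2*k) ^ (1/εt)) ≤ T := by rw [hTdef]; exact le_max_right _ _
    have hexp : Real.exp ((2*k) ^ (1/εt)) ≤ y := le_trans hexpT hy
    have hlog : (2*k) ^ (1/εt) ≤ Real.log y :=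
      (Real.le_log_iff_exp_le hy0).mpr hexp
    have h2k : 2*k ≤ (Real.log y) ^ εt := by
      have h0 : (0:ℝ) ≤ (2*k) ^ (1/εt) := Real.rpow_nonneg (by linarith) _
      calc 2*k = ((2*k) ^ (1/εt)) ^ εt := by
            rw [← Real.rpow_mul (by linarith), one_div_mul_cancel hεt.ne', Real.rpow_one]
        _ ≤ (Real.log y) ^ εt := Real.rpow_le_rpow h0 hlog hεt.le
    have hlow' := hlow y hyT₁
    have hbypos := hbpos y hy0.le
    have hmul : y * ((Real.log y) ^ εt / y) = (Real.log y) ^ εt := by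
      field_simp
    rw [div_le_div_iff₀ hbypos (by norm_num : (0:ℝ) < 2)]
    nlinarith [mul_le_mul_of_nonneg_left hlow' hy0.le]
  refine ⟨c, hc1, ?_⟩
  intro x hx y hy hxy
  have hbx := hbpos x hx
  have hby := hbpos y hy
  have hbound : |x - y| ≤ k / b y := (le_div_iff₀ hby).mpr (by rw [mul_comm]; exact hxy)
  have hb1 := (abs_le.mp hbound).1
  have hb2 := (abs_le.mp hbound).2
  constructor
  · -- b x / c ≤ b y
    rw [div_le_iff₀ hcpos]
    rcases le_or_gt y x with h | h
    · have hle : b x ≤ b y := hbdec (mem_Ici.mpr hy) (mem_Ici.mpr hx) h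
      nlinarith
    · rcases le_or_gt T y with hTy | hTy
      · have hk2 := hkey y hTy
        have hxge : y/2 ≤ x := by linarith
        have h1 : b x ≤ b (y/2) :=
          hbdec (mem_Ici.mpr (by linarith : (0:ℝ) ≤ y/2)) (mem_Ici.mpr hx) hxge
        have h2 := hhalf y hy
        nlinarith [mul_le_mul_of_nonneg_right hcC hby.le]
      · have h1 : b x ≤ b 0 := hbdec (mem_Ici.mpr le_rfl) (mem_Ici.mpr hx) hx
        have h2 : b T ≤ b y := hbdec (mem_Ici.mpr hy) (mem_Ici.mpr hT0) hTy.le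
        have h3 : b M ≤ b y := le_trans hbMT h2
        have e : b 0 / b M * b M = b 0 := div_mul_cancel₀ _ hbM.ne'
        nlinarith [mul_le_mul_of_nonneg_left h3 (div_pos hb0 hbM).le,
          mul_le_mul_of_nonneg_right hcR hby.le]
  · -- b y ≤ c * b x
    rcases le_or_gt x y with h | h
    · have hle : b y ≤ b x := hbdec (mem_Ici.mpr hx) (mem_Ici.mpr hy) h
      nlinarith
    · rcases le_or_gt T y with hTy | hTy
      · have hk2 := hkey y hTy
        have hy0 : (0:ℝ) < y := lt_trans one_pos (lt_of_lt_of_le hT1 hTy)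
        have hxle : x ≤ 2*y := by linarith
        have h1 : b (2*y) ≤ b x :=
          hbdec (mem_Ici.mpr hx) (mem_Ici.mpr (by linarith : (0:ℝ) ≤ 2*y)) hxle
        have h2 : b y ≤ C₁ * b (2*y) := by
          have := hhalf (2*y) (by linarith)
          rwa [show (2*y)/2 = y by ring] at this
        have hC₁0 : (0:ℝ) ≤ C₁ := by linarith
        nlinarith [mul_le_mul_of_nonneg_left h1 hC₁0,
          mul_le_mul_of_nonneg_right hcC hbx.le]
      · have h2 : b T ≤ b y := hbdec (mem_Ici.mpr hy) (mem_Ici.mpr hT0) hTy.le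
        have hdiv : k / b y ≤ k / b T := by
          exact div_le_div_of_nonneg_left hk.le hbT h2
        have hxM : x ≤ M := by rw [hMdef]; linarith
        have h1 : b M ≤ b x := hbdec (mem_Ici.mpr hx) (mem_Ici.mpr hM0) hxM
        have h3 : b y ≤ b 0 := hbdec (mem_Ici.mpr le_rfl) (mem_Ici.mpr hy) hy
        have e : b 0 / b M * b M = b 0 := div_mul_cancel₀ _ hbM.ne'
        nlinarith [mul_le_mul_of_nonneg_left h1 (div_pos hb0 hbM).le,
          mul_le_mul_of_nonneg_right hcR hbx.le]
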